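/- For M in U(n,n) and Z in the hermitian half plane H_n, the matrix CZ+D is invertible, i.e. (M,Z) ↦ CZ+D is well-defined as an element of GL(n,C). -/

import Mathlib

open Matrix
open scoped ComplexOrder

/-- The matrix `J = [[0,-E],[E,0]]` defining the unitary group `U(n,n)`. -/
def Jmat (n : ℕ) : Matrix (Fin n ⊕ Fin n) (Fin n ⊕ Fin n) ℂ :=
  Matrix.fromBlocks 0 (-1) 1 0

/-- `M ∈ U(n,n)` iff `M̄ᵀ J M = J`. -/
def inUnn (n : ℕ) (M : Matrix (Fin n ⊕ Fin n) (Fin n ⊕ Fin n) ℂ) : Prop :=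
  Mᴴ * Jmat n * M = Jmat n

/-- `Z` lies in the hermitian half plane `H_n` iff `i(Z̄ᵀ - Z)` is positive definite. -/
def inHalfPlane (n : ℕ) (Z : Matrix (Fin n) (Fin n) ℂ) : Prop :=
  (Complex.I • (Zᴴ - Z)).PosDef

lemma star_sum_elim {m k : Type*} (a : m → ℂ) (b : k → ℂ) :
    star (Sum.elim a b) = Sum.elim (star a) (star b) := by
  funext i; cases i <;> rfl

/-- For `M = [[A,B],[C,D]] ∈ U(n,n)` and `Z ∈ H_n`, the matrix `CZ+D` is invertible,
so `(M,Z) ↦ CZ+D` is well defined as an element of `GL(n,ℂ)`. -/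
theorem isUnit_CZ_add_D (n : ℕ)
    (M : Matrix (Fin n ⊕ Fin n) (Fin n ⊕ Fin n) ℂ) (hM : inUnn n M)
    (Z : Matrix (Fin n) (Fin n) ℂ) (hZ : inHalfPlane n Z) :
    IsUnit (M.toBlocks₂₁ * Z + M.toBlocks₂₂) := by
  rw [Matrix.isUnit_iff_isUnit_det, isUnit_iff_ne_zero]
  intro hdet
  obtain ⟨v, hv, hv0⟩ := (Matrix.exists_mulVec_eq_zero_iff).2 hdet
  set w : Fin n ⊕ Fin n → ℂ := Sum.elim (Z *ᵥ v) v with hw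
  have hMb : M = Matrix.fromBlocks M.toBlocks₁₁ M.toBlocks₁₂ M.toBlocks₂₁ M.toBlocks₂₂ :=
    (Matrix.fromBlocks_toBlocks M).symm
  have hMw : M *ᵥ w = Sum.elim ((M.toBlocks₁₁ * Z + M.toBlocks₁₂) *ᵥ v) 0 := by
    rw [hw]
    conv_lhs => rw [hMb]
    have hb : (M.toBlocks₂₁ * Z) *ᵥ v + M.toBlocks₂₂ *ᵥ v = 0 := by
      rw [← Matrix.add_mulVec]; exact hv0
    rw [Matrix.fromBlocks_mulVec]
    simp only [Sum.elim_comp_inl, Sum.elim_comp_inr, hb, Matrix.mulVec_mulVec,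
      Matrix.add_mulVec]
  have h1 : star w ⬝ᵥ (Jmat n *ᵥ w) = star v ⬝ᵥ ((Z - Zᴴ) *ᵥ v) := by
    rw [hw, Jmat, Matrix.fromBlocks_mulVec, star_sum_elim,
      sumElim_dotProduct_sumElim]
    simp only [Sum.elim_comp_inl, Sum.elim_comp_inr, Matrix.zero_mulVec, Matrix.neg_mulVec,
      Matrix.one_mulVec, zero_add, add_zero]
    rw [Matrix.star_mulVec, dotProduct_neg, ← Matrix.dotProduct_mulVec,
      Matrix.sub_mulVec, dotProduct_sub]
    ring
  have h2 : star w ⬝ᵥ (Jmat n *ᵥ w) = 0 := by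
    conv_lhs => rw [← hM]
    rw [← Matrix.mulVec_mulVec, ← Matrix.mulVec_mulVec, Matrix.dotProduct_mulVec,
      ← Matrix.star_mulVec, hMw, Jmat, Matrix.fromBlocks_mulVec, star_sum_elim,
      sumElim_dotProduct_sumElim]
    simp
  have hpos := Matrix.PosDef.dotProduct_mulVec_pos hZ hv
  rw [Matrix.smul_mulVec, dotProduct_smul, Matrix.sub_mulVec,
    dotProduct_sub] at hpos
  rw [h2] at h1
  have : star v ⬝ᵥ Zᴴ *ᵥ v - star v ⬝ᵥ Z *ᵥ v = 0 := by
    rw [Matrix.sub_mulVec, dotProduct_sub] at h1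
    linear_combination h1
  rw [this] at hpos
  simp at hpos
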